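/- Let 0 ≤ s ≤ 1/2 and for ζ(0) ∈ h^{1/2-s}₊ define S_B(t, ζ(0)) = (ζ_n(0) e^{i t ω_n(ζ(0))})_{n≥1}, where ω_n(ζ) = n² - 2Σ_k min(n,k)|ζ_k|². Then for each t ∈ ℝ, the map S_B^t : h^{1/2-s}₊ → h^{1/2-s}₊ is a homeomorphism with (S_B^t)⁻¹ = S_B^{-t}, it preserves the h^{1/2-s} norm, and satisfies the group property S_B^{t₁} ∘ S_B^{t₂} = S_B^{t₁+t₂}. -/

import Mathlib

open scoped BigOperators

/-- ω_n(ζ) = n² - 2 Σ_{k≥1} min(n,k)|ζ_k|², with (ζ_k)_{k≥1} represented by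
`ζ : ℕ → ℂ` via ζ_k = ζ (k-1); here `n : ℕ` stands for the paper index n+1. -/
noncomputable def omegaBO (n : ℕ) (ζ : ℕ → ℂ) : ℝ :=
  ((n : ℝ) + 1) ^ 2 - 2 * ∑' k : ℕ, min ((n : ℝ) + 1) ((k : ℝ) + 1) * ‖ζ k‖ ^ 2

/-- The Birkhoff flow S_B(t, ζ)_n = ζ_n e^{i t ω_n(ζ)}. -/
noncomputable def SB (t : ℝ) (ζ : ℕ → ℂ) : ℕ → ℂ :=
  fun n => ζ n * Complex.exp (Complex.I * (omegaBO n ζ : ℂ) * (t : ℂ))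

/-- Membership in h^σ₊ : Σ_{n≥1} n^{2σ}|ζ_n|² < ∞. -/
def memhp (σ : ℝ) (ζ : ℕ → ℂ) : Prop :=
  Summable fun n : ℕ => ((n : ℝ) + 1) ^ (2 * σ) * ‖ζ n‖ ^ 2

/-- The h^σ distance. -/
noncomputable def hdist (σ : ℝ) (ζ η : ℕ → ℂ) : ℝ :=
  Real.sqrt (∑' n : ℕ, ((n : ℝ) + 1) ^ (2 * σ) * ‖ζ n - η n‖ ^ 2)

lemma abs_exp_I_mul (r t : ℝ) : ‖Complex.exp (Complex.I * (r:ℂ) * (t:ℂ))‖ = 1 := by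
  rw [Complex.norm_exp]
  simp [Complex.mul_re]

lemma exp_I_dist (a b : ℝ) :
    ‖Complex.exp (Complex.I * a) - Complex.exp (Complex.I * b)‖ ≤ 2 * |a - b| := by
  have h : Complex.exp (Complex.I * a) - Complex.exp (Complex.I * b)
      = Complex.exp (Complex.I * b) * (Complex.exp (Complex.I * (a - b)) - 1) := by
    rw [mul_sub, mul_one, ← Complex.exp_add]; ring_nf
  rw [h, norm_mul]
  have hb : ‖Complex.exp (Complex.I * b)‖ = 1 := by
    rw [Complex.norm_exp]; simp [Complex.mul_re]
  rw [hb, one_mul]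
  have habs : ‖Complex.I * ((a:ℂ) - b)‖ = |a - b| := by
    rw [norm_mul]; simp [← Complex.ofReal_sub, Complex.norm_real]
  by_cases hc : |a - b| ≤ 1
  · have := Complex.norm_exp_sub_one_le (x := Complex.I * ((a:ℂ) - b)) (by rw [habs]; exact hc)
    rwa [habs] at this
  · have h2 : ‖Complex.exp (Complex.I * ((a:ℂ) - b)) - 1‖ ≤ 2 := by
      calc ‖Complex.exp (Complex.I * ((a:ℂ) - b)) - 1‖
          ≤ ‖Complex.exp (Complex.I * ((a:ℂ) - b))‖ + ‖(1:ℂ)‖ :=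
            (norm_sub_le _ _)
        _ = 2 := by
            rw [Complex.norm_exp]; simp [Complex.mul_re]; norm_num
    push_neg at hc
    nlinarith [abs_nonneg (a - b)]

lemma SB_abs (t : ℝ) (ζ : ℕ → ℂ) (n : ℕ) : ‖SB t ζ n‖ = ‖ζ n‖ := by
  rw [SB, norm_mul, abs_exp_I_mul, mul_one]

lemma omega_SB (t : ℝ) (ζ : ℕ → ℂ) (n : ℕ) : omegaBO n (SB t ζ) = omegaBO n ζ := by
  unfold omegaBO
  congr 2
  exact tsum_congr fun k => by rw [SB_abs]

lemma SB_group (t₁ t₂ : ℝ) (ζ : ℕ → ℂ) : SB t₁ (SB t₂ ζ) = SB (t₁ + t₂) ζ := by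
  funext n
  show SB t₂ ζ n * Complex.exp (Complex.I * (omegaBO n (SB t₂ ζ) : ℂ) * (t₁ : ℂ)) = _
  rw [omega_SB, SB, SB]
  rw [mul_assoc, ← Complex.exp_add]
  congr 1
  push_cast
  ring_nf

lemma SB_zero (ζ : ℕ → ℂ) : SB 0 ζ = ζ := by
  funext n; simp [SB]

lemma omega_diff (ζ η : ℕ → ℂ)
    (hζ : Summable fun k => ‖ζ k‖ ^ 2)
    (hη : Summable fun k => ‖η k‖ ^ 2) (n : ℕ) :
    |omegaBO n ζ - omegaBO n η| ≤
      2 * ((n : ℝ) + 1) *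
        ∑' k, (‖ζ k‖ + ‖η k‖) * ‖ζ k - η k‖ := by
  set c : ℕ → ℝ := fun k => min ((n : ℝ) + 1) ((k : ℝ) + 1) with hc
  have hc0 : ∀ k, 0 ≤ c k := fun k => le_min (by positivity) (by positivity)
  have hcn : ∀ k, c k ≤ (n : ℝ) + 1 := fun k => min_le_left _ _
  have hSζ : Summable fun k => c k * ‖ζ k‖ ^ 2 := by
    apply Summable.of_nonneg_of_le (fun k => by positivity)
      (fun k => mul_le_mul_of_nonneg_right (hcn k) (by positivity))
    exact hζ.mul_left _
  have hSη : Summable fun k => c k * ‖η k‖ ^ 2 := by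
    apply Summable.of_nonneg_of_le (fun k => by positivity)
      (fun k => mul_le_mul_of_nonneg_right (hcn k) (by positivity))
    exact hη.mul_left _
  have hdiff : omegaBO n ζ - omegaBO n η
      = 2 * ∑' k, c k * (‖η k‖ ^ 2 - ‖ζ k‖ ^ 2) := by
    unfold omegaBO
    have : (∑' k, c k * (‖η k‖ ^ 2 - ‖ζ k‖ ^ 2))
        = (∑' k, c k * ‖η k‖ ^ 2) - ∑' k, c k * ‖ζ k‖ ^ 2 := by
      rw [← Summable.tsum_sub hSη hSζ]
      exact tsum_congr fun k => by ring
    rw [this, hc]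
    ring
  rw [hdiff, abs_mul, abs_two]
  have hptb : ∀ k, |c k * (‖η k‖ ^ 2 - ‖ζ k‖ ^ 2)|
      ≤ ((n : ℝ) + 1) * ((‖ζ k‖ + ‖η k‖) * ‖ζ k - η k‖) := by
    intro k
    rw [abs_mul, abs_of_nonneg (hc0 k)]
    have h1 : |‖η k‖ ^ 2 - ‖ζ k‖ ^ 2|
        ≤ (‖ζ k‖ + ‖η k‖) * ‖ζ k - η k‖ := by
      have h2 : |‖η k‖ - ‖ζ k‖| ≤ ‖ζ k - η k‖ := by
        have := abs_norm_sub_norm_le (η k) (ζ k)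
        calc |‖η k‖ - ‖ζ k‖| ≤ ‖η k - ζ k‖ := this
          _ = ‖ζ k - η k‖ := norm_sub_rev _ _
      have h3 : ‖η k‖ ^ 2 - ‖ζ k‖ ^ 2
          = (‖η k‖ + ‖ζ k‖) * (‖η k‖ - ‖ζ k‖) := by ring
      rw [h3, abs_mul, abs_of_nonneg (by positivity)]
      have := mul_le_mul_of_nonneg_left h2
        (show (0:ℝ) ≤ ‖η k‖ + ‖ζ k‖ by positivity)
      calc (‖η k‖ + ‖ζ k‖) * |‖η k‖ - ‖ζ k‖|
          ≤ (‖η k‖ + ‖ζ k‖) * ‖ζ k - η k‖ := this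
        _ = (‖ζ k‖ + ‖η k‖) * ‖ζ k - η k‖ := by ring
    calc c k * |‖η k‖ ^ 2 - ‖ζ k‖ ^ 2|
        ≤ ((n:ℝ)+1) * |‖η k‖ ^ 2 - ‖ζ k‖ ^ 2| :=
          mul_le_mul_of_nonneg_right (hcn k) (abs_nonneg _)
      _ ≤ ((n:ℝ)+1) * ((‖ζ k‖ + ‖η k‖) * ‖ζ k - η k‖) :=
          mul_le_mul_of_nonneg_left h1 (by positivity)
  have hRS : Summable fun k => ((n : ℝ) + 1) *
      ((‖ζ k‖ + ‖η k‖) * ‖ζ k - η k‖) := by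
    apply Summable.mul_left
    apply Summable.of_nonneg_of_le (fun k => by positivity)
      (fun k => ?_) ((hζ.mul_left 2).add (hη.mul_left 2))
    have hd : ‖ζ k - η k‖ ≤ ‖ζ k‖ + ‖η k‖ :=
      norm_sub_le _ _
    nlinarith [norm_nonneg (ζ k), norm_nonneg (η k), sq_nonneg (‖ζ k‖ - ‖η k‖)]
  have hLS : Summable fun k => c k * (‖η k‖ ^ 2 - ‖ζ k‖ ^ 2) := (hSη.sub hSζ).congr fun k => by ring
  have habs : |∑' k, c k * (‖η k‖ ^ 2 - ‖ζ k‖ ^ 2)|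
      ≤ ∑' k, ((n : ℝ) + 1) * ((‖ζ k‖ + ‖η k‖) * ‖ζ k - η k‖) := by
    calc |∑' k, c k * (‖η k‖ ^ 2 - ‖ζ k‖ ^ 2)|
        ≤ ∑' k, |c k * (‖η k‖ ^ 2 - ‖ζ k‖ ^ 2)| := by
          have hns : Summable fun k => ‖c k * (‖η k‖ ^ 2 - ‖ζ k‖ ^ 2)‖ := by
            simpa only [Real.norm_eq_abs] using hLS.abs
          have h := norm_tsum_le_tsum_norm hns
          simpa only [Real.norm_eq_abs] using h
      _ ≤ ∑' k, ((n : ℝ) + 1) * ((‖ζ k‖ + ‖η k‖) * ‖ζ k - η k‖) :=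
          Summable.tsum_le_tsum hptb (hLS.abs) hRS
  rw [tsum_mul_left] at habs
  calc 2 * |∑' k, c k * (‖η k‖ ^ 2 - ‖ζ k‖ ^ 2)|
      ≤ 2 * (((n:ℝ)+1) * ∑' k, (‖ζ k‖ + ‖η k‖) * ‖ζ k - η k‖) := by
        linarith [habs]
    _ = 2 * ((n : ℝ) + 1) * ∑' k, (‖ζ k‖ + ‖η k‖) * ‖ζ k - η k‖ := by ring

lemma young (x y δ : ℝ) (hx : 0 ≤ x) (hδ : 0 < δ) : x*y ≤ (δ/2)*x^2 + (1/(2*δ))*y^2 := by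
  have h := sq_nonneg (δ*x - y)
  have h2 : (0:ℝ) < 2*δ := by linarith
  have he : (δ/2)*x^2 + (1/(2*δ))*y^2 - x*y = (δ*x - y)^2/(2*δ) := by field_simp; ring
  nlinarith [div_nonneg h (le_of_lt h2)]

set_option maxHeartbeats 4000000 in
lemma SB_cont (σ : ℝ) (hσ : 0 ≤ σ) (t : ℝ) (ζ : ℕ → ℂ) (hζ : memhp σ ζ)
    (ε : ℝ) (hε : 0 < ε) :
    ∃ δ : ℝ, 0 < δ ∧ ∀ η : ℕ → ℂ, memhp σ η → hdist σ ζ η < δ →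
      hdist σ (SB t ζ) (SB t η) < ε := by
  classical
  set w : ℕ → ℝ := fun n => ((n:ℝ)+1) ^ (2*σ) with hw
  have hw1 : ∀ n, (1:ℝ) ≤ w n := fun n =>
    Real.one_le_rpow (by push_cast; linarith [Nat.cast_nonneg (α := ℝ) n]) (by linarith)
  have hw0 : ∀ n, (0:ℝ) ≤ w n := fun n => le_trans zero_le_one (hw1 n)
  set a : ℕ → ℝ := fun n => ‖ζ n‖ with ha
  have ha0 : ∀ n, 0 ≤ a n := fun n => norm_nonneg _
  have hζw : Summable fun n => w n * a n ^ 2 := hζ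
  have hζ2 : Summable fun n => a n ^ 2 :=
    hζw.of_nonneg_of_le (fun n => by positivity)
      (fun n => le_mul_of_one_le_left (by positivity) (hw1 n))
  set A : ℝ := ∑' n, w n * a n ^ 2 with hA
  have hA0 : 0 ≤ A := tsum_nonneg fun n => by positivity
  have haA : (∑' n, a n ^ 2) ≤ A :=
    Summable.tsum_le_tsum (fun n => le_mul_of_one_le_left (by positivity) (hw1 n)) hζ2 hζw
  -- choose N
  have htail : Filter.Tendsto (fun i => ∑' k, w (k+i) * a (k+i) ^ 2) Filter.atTop (nhds 0) :=
    tendsto_sum_nat_add (fun n => w n * a n ^ 2)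
  have hev : ∀ᶠ i in Filter.atTop, (∑' k, w (k+i) * a (k+i) ^ 2) < ε^2/100 :=
    htail.eventually_lt_const (by positivity)
  obtain ⟨N, hN, hN1⟩ := (hev.and (Filter.eventually_ge_atTop 1)).exists
  set B : ℝ := 3*A + 3 with hB
  have hBpos : 0 < B := by positivity
  set C : ℝ := 32*t^2*(N:ℝ)^2*B^2*A + 2 with hC
  have hCpos : 0 < C := by positivity
  refine ⟨min 1 (ε / (2*Real.sqrt C)), lt_min one_pos (by positivity), ?_⟩
  set δ : ℝ := min 1 (ε / (2*Real.sqrt C)) with hδ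
  have hδpos : 0 < δ := lt_min one_pos (by positivity)
  have hδ1 : δ ≤ 1 := min_le_left _ _
  have hδsq : C * δ^2 ≤ ε^2/4 := by
    have h1 : δ ≤ ε / (2*Real.sqrt C) := min_le_right _ _
    have h2 : δ^2 ≤ (ε / (2*Real.sqrt C))^2 := by
      apply sq_le_sq' _ h1; linarith
    have h3 : (ε / (2*Real.sqrt C))^2 = ε^2 / (4*C) := by
      rw [div_pow]; congr 1
      rw [mul_pow, Real.sq_sqrt hCpos.le]; ring
    rw [h3] at h2
    calc C * δ^2 ≤ C * (ε^2/(4*C)) := by nlinarith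
      _ = ε^2/4 := by field_simp
  intro η hη hdζη
  set b : ℕ → ℝ := fun n => ‖η n‖ with hb
  have hb0 : ∀ n, 0 ≤ b n := fun n => norm_nonneg _
  set d : ℕ → ℝ := fun n => ‖ζ n - η n‖ with hd
  have hd0 : ∀ n, 0 ≤ d n := fun n => norm_nonneg _
  have hηw : Summable fun n => w n * b n ^ 2 := hη
  have hη2 : Summable fun n => b n ^ 2 :=
    hηw.of_nonneg_of_le (fun n => by positivity)
      (fun n => le_mul_of_one_le_left (by positivity) (hw1 n))
  have hdab : ∀ n, d n ≤ a n + b n := fun n => norm_sub_le _ _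
  have hbad : ∀ n, b n ≤ a n + d n := by
    intro n
    have : ‖η n‖ ≤ ‖ζ n‖ + ‖ζ n - η n‖ := by
      calc ‖η n‖ = ‖ζ n - (ζ n - η n)‖ := by ring_nf
        _ ≤ ‖ζ n‖ + ‖ζ n - η n‖ := norm_sub_le _ _
    exact this
  have hdw : Summable fun n => w n * d n ^ 2 := by
    apply Summable.of_nonneg_of_le (fun n => by positivity)
      (fun n => ?_) ((hζw.mul_left 2).add (hηw.mul_left 2))
    have hh := hdab n
    have h' : d n^2 ≤ (a n + b n)^2 := sq_le_sq' (by linarith [ha0 n, hb0 n, hd0 n]) hh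
    have h1 : d n ^ 2 ≤ 2*a n^2 + 2*b n^2 := by nlinarith [sq_nonneg (a n - b n)]
    calc w n * d n ^ 2 ≤ w n * (2*a n^2 + 2*b n^2) :=
          mul_le_mul_of_nonneg_left h1 (hw0 n)
      _ = 2 * (w n * a n ^ 2) + 2 * (w n * b n ^ 2) := by ring
  have hd2 : Summable fun n => d n ^ 2 :=
    hdw.of_nonneg_of_le (fun n => by positivity)
      (fun n => le_mul_of_one_le_left (by positivity) (hw1 n))
  -- the weighted distance
  have hQw : (∑' n, w n * d n ^ 2) < δ^2 := by
    have := Real.lt_sq_of_sqrt_lt (x := ∑' n, w n * d n ^ 2) (y := δ) (by exact hdζη)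
    exact this
  have hQw0 : 0 ≤ ∑' n, w n * d n ^ 2 := tsum_nonneg fun n => by positivity
  have hQ : (∑' n, d n ^ 2) ≤ ∑' n, w n * d n ^ 2 :=
    Summable.tsum_le_tsum (fun n => le_mul_of_one_le_left (by positivity) (hw1 n)) hd2 hdw
  -- bound Sd := ∑' (a+b) d  by δ * B
  have hbη : (∑' n, b n ^ 2) ≤ 2*A + 2*δ^2 := by
    have hpt : ∀ n, b n ^ 2 ≤ 2*(w n * a n^2) + 2*(w n * d n^2) := by
      intro n
      have hh := hbad n
      have h' : b n^2 ≤ (a n + d n)^2 := sq_le_sq' (by linarith [ha0 n, hb0 n, hd0 n]) hh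
      have h1 : b n ^ 2 ≤ 2*a n^2 + 2*d n^2 := by nlinarith [sq_nonneg (a n - d n)]
      have h2 : a n ^2 ≤ w n * a n^2 := le_mul_of_one_le_left (by positivity) (hw1 n)
      have h3 : d n ^2 ≤ w n * d n^2 := le_mul_of_one_le_left (by positivity) (hw1 n)
      linarith
    calc (∑' n, b n ^ 2) ≤ ∑' n, (2*(w n * a n^2) + 2*(w n * d n^2)) :=
          Summable.tsum_le_tsum hpt hη2 ((hζw.mul_left 2).add (hdw.mul_left 2))
      _ = 2*A + 2*(∑' n, w n * d n^2) := by
          rw [Summable.tsum_add (hζw.mul_left 2) (hdw.mul_left 2), tsum_mul_left, tsum_mul_left]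
      _ ≤ 2*A + 2*δ^2 := by linarith
  have hSd : (∑' k, (a k + b k) * d k) ≤ δ * B := by
    have hsum2 : Summable fun k => (δ/2)*(a k + b k)^2 + (1/(2*δ))*(d k)^2 := by
      apply Summable.add
      · apply Summable.mul_left
        apply Summable.of_nonneg_of_le (fun k => by positivity)
          (fun k => by nlinarith [ha0 k, hb0 k, sq_nonneg (a k - b k)])
          ((hζ2.mul_left 2).add (hη2.mul_left 2))
      · exact hd2.mul_left _
    have hsum1 : Summable fun k => (a k + b k) * d k := by
      apply Summable.of_nonneg_of_le (fun k => by positivity)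
        (fun k => ?_) ((hζ2.mul_left 2).add (hη2.mul_left 2))
      have := hdab k
      nlinarith [ha0 k, hb0 k, hd0 k, sq_nonneg (a k - b k)]
    have hpt : ∀ k, (a k + b k) * d k ≤ (δ/2)*(a k + b k)^2 + (1/(2*δ))*(d k)^2 :=
      fun k => young _ _ _ (by positivity) hδpos
    have hP : (∑' k, (a k + b k)^2) ≤ 6*A + 4 := by
      have hpt2 : ∀ k, (a k + b k)^2 ≤ 2*a k^2 + 2*b k^2 := fun k => by
        nlinarith [sq_nonneg (a k - b k)]
      have hsumP : Summable fun k => (a k + b k)^2 :=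
        Summable.of_nonneg_of_le (fun k => by positivity) hpt2
          ((hζ2.mul_left 2).add (hη2.mul_left 2))
      calc (∑' k, (a k + b k)^2) ≤ ∑' k, (2*a k^2 + 2*b k^2) :=
            Summable.tsum_le_tsum hpt2 hsumP ((hζ2.mul_left 2).add (hη2.mul_left 2))
        _ = 2*(∑' k, a k^2) + 2*(∑' k, b k^2) := by
            rw [Summable.tsum_add (hζ2.mul_left 2) (hη2.mul_left 2), tsum_mul_left, tsum_mul_left]
        _ ≤ 2*A + 2*(2*A + 2*δ^2) := by linarith
        _ ≤ 6*A + 4 := by nlinarith [hδ1, hδpos.le]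
    calc (∑' k, (a k + b k) * d k)
        ≤ ∑' k, ((δ/2)*(a k + b k)^2 + (1/(2*δ))*(d k)^2) := Summable.tsum_le_tsum hpt hsum1 hsum2
      _ = (δ/2)*(∑' k, (a k + b k)^2) + (1/(2*δ))*(∑' k, d k^2) := by
          rw [Summable.tsum_add (by
            apply Summable.mul_left
            apply Summable.of_nonneg_of_le (fun k => by positivity)
              (fun k => by nlinarith [ha0 k, hb0 k, sq_nonneg (a k - b k)])
              ((hζ2.mul_left 2).add (hη2.mul_left 2))) (hd2.mul_left _), tsum_mul_left, tsum_mul_left]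
      _ ≤ (δ/2)*(6*A+4) + (1/(2*δ))*δ^2 := by
          have h1 : (∑' k, d k^2) ≤ δ^2 := le_of_lt (lt_of_le_of_lt hQ hQw)
          have h2 : (0:ℝ) ≤ ∑' k, (a k + b k)^2 := tsum_nonneg fun k => by positivity
          have h3 : (0:ℝ) < 1/(2*δ) := by positivity
          nlinarith
      _ = δ*(3*A + 2) + δ/2 := by field_simp; ring
      _ ≤ δ * B := by rw [hB]; nlinarith [hδpos.le]
  -- omega difference bound
  have homega : ∀ n, |omegaBO n ζ - omegaBO n η| ≤ 2*((n:ℝ)+1)*(δ*B) := by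
    intro n
    have h := omega_diff ζ η hζ2 hη2 n
    have h2 : (∑' k, (‖ζ k‖ + ‖η k‖) * ‖ζ k - η k‖) ≤ δ*B := hSd
    calc |omegaBO n ζ - omegaBO n η|
        ≤ 2*((n:ℝ)+1) * ∑' k, (‖ζ k‖ + ‖η k‖) * ‖ζ k - η k‖ := h
      _ ≤ 2*((n:ℝ)+1)*(δ*B) := mul_le_mul_of_nonneg_left h2 (by positivity)
  set E : ℕ → ℝ := fun n =>
    ‖Complex.exp (Complex.I * (omegaBO n ζ : ℂ) * (t:ℂ))
      - Complex.exp (Complex.I * (omegaBO n η : ℂ) * (t:ℂ))‖ with hE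
  have hE0 : ∀ n, 0 ≤ E n := fun n => norm_nonneg _
  have hE2 : ∀ n, E n ≤ 2 := by
    intro n
    calc E n ≤ ‖Complex.exp (Complex.I * (omegaBO n ζ : ℂ) * (t:ℂ))‖
        + ‖Complex.exp (Complex.I * (omegaBO n η : ℂ) * (t:ℂ))‖ :=
          norm_sub_le _ _
      _ = 2 := by rw [abs_exp_I_mul, abs_exp_I_mul]; norm_num
  have hEl : ∀ n, E n ≤ 4 * |t| * ((n:ℝ)+1)*(δ*B) := by
    intro n
    have hx : Complex.I * (omegaBO n ζ : ℂ) * (t:ℂ) = Complex.I * ((omegaBO n ζ * t : ℝ):ℂ) := by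
      push_cast; ring
    have hy : Complex.I * (omegaBO n η : ℂ) * (t:ℂ) = Complex.I * ((omegaBO n η * t : ℝ):ℂ) := by
      push_cast; ring
    have h1 : E n ≤ 2 * |omegaBO n ζ * t - omegaBO n η * t| := by
      rw [hE]; simp only [hx, hy]; exact exp_I_dist _ _
    have h2 : |omegaBO n ζ * t - omegaBO n η * t| = |omegaBO n ζ - omegaBO n η| * |t| := by
      rw [← abs_mul]; congr 1; ring
    have h3 := homega n
    have h4 : (0:ℝ) ≤ |t| := abs_nonneg _
    calc E n ≤ 2 * (|omegaBO n ζ - omegaBO n η| * |t|) := by rw [← h2]; exact h1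
      _ ≤ 2 * ((2*((n:ℝ)+1)*(δ*B)) * |t|) := by
          apply mul_le_mul_of_nonneg_left _ (by norm_num)
          exact mul_le_mul_of_nonneg_right h3 h4
      _ = 4 * |t| * ((n:ℝ)+1)*(δ*B) := by ring
  have hterm : ∀ n, ‖SB t ζ n - SB t η n‖ ≤ a n * E n + d n := by
    intro n
    have hsplit : SB t ζ n - SB t η n
        = ζ n * (Complex.exp (Complex.I * (omegaBO n ζ : ℂ) * (t:ℂ))
            - Complex.exp (Complex.I * (omegaBO n η : ℂ) * (t:ℂ)))
          + (ζ n - η n) * Complex.exp (Complex.I * (omegaBO n η : ℂ) * (t:ℂ)) := by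
      unfold SB; ring
    calc ‖SB t ζ n - SB t η n‖
        ≤ ‖ζ n * (Complex.exp (Complex.I * (omegaBO n ζ : ℂ) * (t:ℂ))
            - Complex.exp (Complex.I * (omegaBO n η : ℂ) * (t:ℂ)))‖
          + ‖(ζ n - η n) * Complex.exp (Complex.I * (omegaBO n η : ℂ) * (t:ℂ))‖ := by
          rw [hsplit]; exact norm_add_le _ _
      _ = a n * E n + d n := by
          rw [norm_mul, norm_mul, abs_exp_I_mul, mul_one]
  -- summability of the pieces
  have hg : Summable fun n => w n * a n^2 * E n^2 := by
    apply Summable.of_nonneg_of_le (fun n => by positivity) (fun n => ?_) (hζw.mul_left 4)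
    have hEsq : E n ^ 2 ≤ 4 := by nlinarith [hE0 n, hE2 n]
    calc w n * a n^2 * E n^2 ≤ w n * a n^2 * 4 :=
          mul_le_mul_of_nonneg_left hEsq (by positivity)
      _ = 4 * (w n * a n^2) := by ring
  have hptS : ∀ n, w n * ‖SB t ζ n - SB t η n‖^2
      ≤ 2*(w n * a n^2 * E n^2) + 2*(w n * d n^2) := by
    intro n
    have hpos : 0 ≤ a n * E n + d n := by positivity
    have h1 : ‖SB t ζ n - SB t η n‖^2 ≤ (a n * E n + d n)^2 :=
      sq_le_sq' (by linarith [norm_nonneg (SB t ζ n - SB t η n)]) (hterm n)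
    have h2 : (a n * E n + d n)^2 ≤ 2*(a n * E n)^2 + 2*d n^2 := by
      nlinarith [sq_nonneg (a n * E n - d n)]
    calc w n * ‖SB t ζ n - SB t η n‖^2
        ≤ w n * (2*(a n * E n)^2 + 2*d n^2) :=
          mul_le_mul_of_nonneg_left (le_trans h1 h2) (hw0 n)
      _ = 2*(w n * a n^2 * E n^2) + 2*(w n * d n^2) := by ring
  have hS : Summable fun n => w n * ‖SB t ζ n - SB t η n‖^2 := by
    apply Summable.of_nonneg_of_le (fun n => by positivity) hptS
      ((hg.mul_left 2).add (hdw.mul_left 2))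
  -- split G at N
  set G : ℝ := ∑' n, w n * a n^2 * E n^2 with hG
  have hgN : Summable fun k => w (k+N) * a (k+N)^2 * E (k+N)^2 := (summable_nat_add_iff N).2 hg
  have hζwN : Summable fun k => w (k+N) * a (k+N)^2 := (summable_nat_add_iff N).2 hζw
  have hsplitG : (∑ i ∈ Finset.range N, w i * a i^2 * E i^2)
      + (∑' k, w (k+N) * a (k+N)^2 * E (k+N)^2) = G := Summable.sum_add_tsum_nat_add N hg
  have hhead : (∑ i ∈ Finset.range N, w i * a i^2 * E i^2)
      ≤ (16*t^2*(N:ℝ)^2*B^2*δ^2) * A := by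
    have hpt : ∀ i ∈ Finset.range N, w i * a i^2 * E i^2
        ≤ (16*t^2*(N:ℝ)^2*B^2*δ^2) * (w i * a i^2) := by
      intro i hi
      have hiN : (i:ℝ) + 1 ≤ (N:ℝ) := by
        have := Finset.mem_range.1 hi
        exact_mod_cast Nat.succ_le_of_lt this
      have h1 : E i ≤ 4 * |t| * (N:ℝ)*(δ*B) := by
        calc E i ≤ 4 * |t| * ((i:ℝ)+1)*(δ*B) := hEl i
          _ ≤ 4 * |t| * (N:ℝ)*(δ*B) := by
              have h4 : (0:ℝ) ≤ 4*|t| := by positivity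
              have h5 : (0:ℝ) ≤ δ*B := by positivity
              exact mul_le_mul_of_nonneg_right (mul_le_mul_of_nonneg_left hiN h4) h5
      have h2 : E i ^ 2 ≤ 16*t^2*(N:ℝ)^2*B^2*δ^2 := by
        have := sq_le_sq' (by nlinarith [hE0 i]) h1
        calc E i ^2 ≤ (4 * |t| * (N:ℝ)*(δ*B))^2 := this
          _ = 16*t^2*(N:ℝ)^2*B^2*δ^2 := by rw [mul_pow, mul_pow, mul_pow, mul_pow, sq_abs]; ring
      calc w i * a i^2 * E i^2 ≤ w i * a i^2 * (16*t^2*(N:ℝ)^2*B^2*δ^2) :=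
            mul_le_mul_of_nonneg_left h2 (by positivity)
        _ = (16*t^2*(N:ℝ)^2*B^2*δ^2) * (w i * a i^2) := by ring
    calc (∑ i ∈ Finset.range N, w i * a i^2 * E i^2)
        ≤ ∑ i ∈ Finset.range N, (16*t^2*(N:ℝ)^2*B^2*δ^2) * (w i * a i^2) :=
          Finset.sum_le_sum hpt
      _ = (16*t^2*(N:ℝ)^2*B^2*δ^2) * ∑ i ∈ Finset.range N, (w i * a i^2) := by
          rw [Finset.mul_sum]
      _ ≤ (16*t^2*(N:ℝ)^2*B^2*δ^2) * A := by
          apply mul_le_mul_of_nonneg_left _ (by positivity)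
          exact Summable.sum_le_tsum (Finset.range N) (fun i _ => by positivity) hζw
  have htailG : (∑' k, w (k+N) * a (k+N)^2 * E (k+N)^2) ≤ 4*(ε^2/100) := by
    have hpt : ∀ k, w (k+N) * a (k+N)^2 * E (k+N)^2 ≤ 4 * (w (k+N) * a (k+N)^2) := by
      intro k
      have hEsq : E (k+N) ^ 2 ≤ 4 := by nlinarith [hE0 (k+N), hE2 (k+N)]
      calc w (k+N) * a (k+N)^2 * E (k+N)^2 ≤ w (k+N) * a (k+N)^2 * 4 :=
            mul_le_mul_of_nonneg_left hEsq (by positivity)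
        _ = 4 * (w (k+N) * a (k+N)^2) := by ring
    calc (∑' k, w (k+N) * a (k+N)^2 * E (k+N)^2)
        ≤ ∑' k, 4 * (w (k+N) * a (k+N)^2) := Summable.tsum_le_tsum hpt hgN (hζwN.mul_left 4)
      _ = 4 * ∑' k, (w (k+N) * a (k+N)^2) := tsum_mul_left
      _ ≤ 4*(ε^2/100) := by nlinarith [hN]
  have hGle : G ≤ (16*t^2*(N:ℝ)^2*B^2*δ^2) * A + 4*(ε^2/100) := by
    rw [← hsplitG]; exact add_le_add hhead htailG
  -- total
  have hSle : (∑' n, w n * ‖SB t ζ n - SB t η n‖^2) ≤ 2*G + 2*(∑' n, w n * d n ^ 2) := by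
    calc (∑' n, w n * ‖SB t ζ n - SB t η n‖^2)
        ≤ ∑' n, (2*(w n * a n^2 * E n^2) + 2*(w n * d n^2)) :=
          Summable.tsum_le_tsum hptS hS ((hg.mul_left 2).add (hdw.mul_left 2))
      _ = 2*G + 2*(∑' n, w n * d n ^ 2) := by
          rw [Summable.tsum_add (hg.mul_left 2) (hdw.mul_left 2), tsum_mul_left, tsum_mul_left]
  have hfinal : (∑' n, w n * ‖SB t ζ n - SB t η n‖^2) < ε^2 := by
    have h1 : 2*G ≤ 32*t^2*(N:ℝ)^2*B^2*A*δ^2 + 8*(ε^2/100) := by nlinarith [hGle]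
    have h2 : 2*(∑' n, w n * d n ^ 2) < 2*δ^2 := by linarith
    have h3 : 32*t^2*(N:ℝ)^2*B^2*A*δ^2 + 2*δ^2 = C * δ^2 := by rw [hC]; ring
    nlinarith [hδsq, sq_nonneg ε, hε]
  show Real.sqrt (∑' n, w n * ‖SB t ζ n - SB t η n‖^2) < ε
  rw [Real.sqrt_lt' hε]
  exact hfinal

/-- For 0 ≤ s ≤ 1/2 and σ = 1/2 - s, each time-t flow map S_B^t maps h^σ₊ into itself,
is a homeomorphism with inverse S_B^{-t}, preserves the h^σ norm, and satisfies the
group property S_B^{t₁} ∘ S_B^{t₂} = S_B^{t₁+t₂}. -/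
theorem stmt14 (s : ℝ) (hs0 : 0 ≤ s) (hs : s ≤ 1/2) (t : ℝ) :
    (∀ ζ : ℕ → ℂ, memhp (1/2 - s) ζ → memhp (1/2 - s) (SB t ζ)) ∧
    (∀ ζ : ℕ → ℂ, memhp (1/2 - s) ζ → SB (-t) (SB t ζ) = ζ ∧ SB t (SB (-t) ζ) = ζ) ∧
    (∀ ζ : ℕ → ℂ, memhp (1/2 - s) ζ →
      (∑' n : ℕ, ((n : ℝ) + 1) ^ (2 * (1/2 - s)) * ‖SB t ζ n‖ ^ 2)
        = ∑' n : ℕ, ((n : ℝ) + 1) ^ (2 * (1/2 - s)) * ‖ζ n‖ ^ 2) ∧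
    (∀ t₁ t₂ : ℝ, ∀ ζ : ℕ → ℂ, memhp (1/2 - s) ζ → SB t₁ (SB t₂ ζ) = SB (t₁ + t₂) ζ) ∧
    (∀ ζ : ℕ → ℂ, memhp (1/2 - s) ζ → ∀ ε : ℝ, 0 < ε → ∃ δ : ℝ, 0 < δ ∧
      ∀ η : ℕ → ℂ, memhp (1/2 - s) η → hdist (1/2 - s) ζ η < δ →
        hdist (1/2 - s) (SB t ζ) (SB t η) < ε) := by
  refine ⟨?_, ?_, ?_, ?_, ?_⟩
  · intro ζ hζ
    exact hζ.congr fun n => by rw [SB_abs]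
  · intro ζ _
    constructor
    · rw [SB_group, neg_add_cancel, SB_zero]
    · rw [SB_group, add_neg_cancel, SB_zero]
  · intro ζ _
    exact tsum_congr fun n => by rw [SB_abs]
  · intro t₁ t₂ ζ _
    exact SB_group t₁ t₂ ζ
  · intro ζ hζ ε hε
    exact SB_cont (1/2 - s) (by linarith) t ζ hζ ε hε
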